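/- Let F be a non-empty nested collection of open discs in ℂ with bounded radii. Then there exists a nested increasing sequence (D_n) of discs in F such that the union of the D_n equals the union of F, and the radius of the union equals the limit of the radii r(D_n). -/

import Mathlib

open Metric Set Filter

/-- An open disc in the complex plane: a set of the form `B(z,r)` with `r > 0`. -/
def IsOpenDisc (D : Set ℂ) : Prop := ∃ z : ℂ, ∃ r : ℝ, 0 < r ∧ D = Metric.ball z r

/-- The radius of a disc, computed as half its diameter (so `r = 0` for `∅` or singletons). -/
noncomputable def discRadius (D : Set ℂ) : ℝ := Metric.diam D / 2

lemma diam_ball_complex (z : ℂ) {r : ℝ} (hr : 0 ≤ r) :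
    Metric.diam (Metric.ball z r) = 2 * r := by
  refine le_antisymm (Metric.diam_ball hr) ?_
  by_contra h
  push_neg at h
  have hd : 0 ≤ Metric.diam (Metric.ball z r) := Metric.diam_nonneg
  obtain ⟨t, ht1, ht2⟩ := exists_between (show Metric.diam (Metric.ball z r) / 2 < r by linarith)
  have ht0 : 0 ≤ t := le_trans (by linarith) ht1.le
  have h1 : (z + (t : ℂ)) ∈ Metric.ball z r := by
    simp [Metric.mem_ball, Complex.dist_eq, abs_of_nonneg ht0, ht2]
  have h2 : (z - (t : ℂ)) ∈ Metric.ball z r := by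
    simp [Metric.mem_ball, Complex.dist_eq, abs_of_nonneg ht0, ht2]
  have := Metric.dist_le_diam_of_mem Metric.isBounded_ball h1 h2
  rw [Complex.dist_eq, show z + (t:ℂ) - (z - t) = ((2*t : ℝ) : ℂ) by push_cast; ring,
    Complex.norm_real, Real.norm_of_nonneg (by linarith)] at this
  linarith

lemma discRadius_ball (z : ℂ) {r : ℝ} (hr : 0 ≤ r) :
    discRadius (Metric.ball z r) = r := by
  rw [discRadius, diam_ball_complex z hr]; ring

lemma ball_subset_ball_dist {z z' : ℂ} {r r' : ℝ} (hr' : 0 < r')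
    (h : Metric.ball z' r' ⊆ Metric.ball z r) : dist z' z + r' ≤ r := by
  by_contra hc
  push_neg at hc
  have hz' : z' ∈ Metric.ball z r := h (Metric.mem_ball_self hr')
  rw [Metric.mem_ball] at hz'
  set t : ℝ := r - dist z' z with htdef
  have ht0 : 0 < t := by simp only [htdef]; linarith [dist_nonneg (x := z') (y := z)]
  have htr' : t < r' := by simp only [htdef]; linarith
  set v : ℂ := if z' = z then 1 else (z' - z) / ((‖z' - z‖ : ℝ) : ℂ) with hvdef
  have hv : ‖v‖ = 1 := by
    rw [hvdef]
    split
    · simp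
    · rename_i hzz
      have hne : (z' - z) ≠ 0 := sub_ne_zero.mpr hzz
      have habs : ‖z' - z‖ ≠ 0 := (norm_pos_iff.mpr hne).ne'
      rw [norm_div, Complex.norm_real, norm_norm, div_self habs]
  have hkey : ‖z' + (t : ℂ) * v - z‖ = dist z' z + t := by
    rw [hvdef]
    split
    · rename_i hzz
      subst hzz
      simp [abs_of_nonneg ht0.le]
    · rename_i hzz
      have hne : (z' - z) ≠ 0 := sub_ne_zero.mpr hzz
      have habs : ‖z' - z‖ ≠ 0 := (norm_pos_iff.mpr hne).ne'
      have hvz : ((‖z' - z‖ : ℝ) : ℂ) * ((z' - z) / ((‖z' - z‖ : ℝ) : ℂ)) = z' - z := by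
        have habsC : ((‖z' - z‖ : ℝ) : ℂ) ≠ 0 := by exact_mod_cast habs
        rw [mul_comm]
        exact div_mul_cancel₀ _ habsC
      have : z' + (t : ℂ) * ((z' - z) / ((‖z' - z‖ : ℝ) : ℂ)) - z
          = ((‖z' - z‖ + t : ℝ) : ℂ) * ((z' - z) / ((‖z' - z‖ : ℝ) : ℂ)) := by
        push_cast
        rw [add_mul]
        rw [show ((‖z' - z‖ : ℝ) : ℂ) * ((z' - z) / ((‖z' - z‖ : ℝ) : ℂ)) = z' - z from hvz]
        ring
      rw [this, norm_mul, norm_div, Complex.norm_real, Complex.norm_real,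
        norm_norm, div_self habs, mul_one,
        Real.norm_of_nonneg (by positivity), Complex.dist_eq]
  have hw1 : z' + (t : ℂ) * v ∈ Metric.ball z' r' := by
    rw [Metric.mem_ball, Complex.dist_eq]
    rw [show z' + (t:ℂ)*v - z' = (t:ℂ)*v by ring, norm_mul, hv, Complex.norm_real,
      Real.norm_of_nonneg ht0.le, mul_one]
    exact htr'
  have hw2 := h hw1
  rw [Metric.mem_ball, Complex.dist_eq, hkey] at hw2
  simp only [htdef] at hw2
  linarith

theorem exists_increasing_sequence_of_nested_open_discs (F : Set (Set ℂ)) (hne : F.Nonempty)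
    (hchain : IsChain (· ⊆ ·) F) (hdisc : ∀ D ∈ F, IsOpenDisc D)
    (hbdd : BddAbove (discRadius '' F)) :
    ∃ D : ℕ → Set ℂ, (∀ n, D n ∈ F) ∧ (∀ n, D n ⊆ D (n + 1)) ∧
      (⋃ n, D n) = ⋃₀ F ∧
      Filter.Tendsto (fun n => discRadius (D n)) Filter.atTop (nhds (discRadius (⋃₀ F))) := by
  classical
  set s : ℝ := sSup (discRadius '' F) with hsdef
  have hle : ∀ A ∈ F, discRadius A ≤ s := fun A hA => le_csSup hbdd ⟨A, hA, rfl⟩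
  have hrad : ∀ A ∈ F, 0 < discRadius A := by
    intro A hA
    obtain ⟨z, r, hr, rfl⟩ := hdisc A hA
    rw [discRadius_ball z hr.le]; exact hr
  obtain ⟨A₀, hA₀⟩ := id hne
  have hs0 : 0 < s := lt_of_lt_of_le (hrad A₀ hA₀) (hle A₀ hA₀)
  -- choose elements with radius close to s
  have hex : ∀ n : ℕ, ∃ A ∈ F, s - 1 / (n + 1) < discRadius A := by
    intro n
    have : s - 1 / (n + 1) < sSup (discRadius '' F) := by
      rw [← hsdef]
      have : (0:ℝ) < 1 / (n+1) := by positivity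
      linarith
    obtain ⟨a, ⟨A, hA, rfl⟩, ha⟩ := exists_lt_of_lt_csSup (Set.Nonempty.image _ hne) this
    exact ⟨A, hA, ha⟩
  choose E hEF hEr using hex
  -- build increasing sequence
  let D : ℕ → Set ℂ := fun n => Nat.rec (E 0) (fun n Dn => if Dn ⊆ E (n+1) then E (n+1) else Dn) n
  have hmem : ∀ n, D n ∈ F := by
    intro n
    induction n with
    | zero => exact hEF 0
    | succ n ih =>
      show (@ite _ (D n ⊆ E (n+1)) (Classical.propDecidable _) (E (n+1)) (D n)) ∈ F
      split <;> [exact hEF (n+1); exact ih]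
  have hmono : ∀ n, D n ⊆ D (n + 1) := by
    intro n
    show D n ⊆ (@ite _ (D n ⊆ E (n+1)) (Classical.propDecidable _) (E (n+1)) (D n))
    split <;> [assumption; rfl]
  have hBdd : ∀ A ∈ F, Bornology.IsBounded A := by
    intro A hA
    obtain ⟨z, r, hr, rfl⟩ := hdisc A hA
    exact Metric.isBounded_ball
  have hrlow : ∀ n, s - 1 / (n + 1) < discRadius (D n) := by
    intro n
    induction n with
    | zero => exact hEr 0
    | succ n ih =>
      have hstep : D (n+1) = @ite _ (D n ⊆ E (n+1)) (Classical.propDecidable _) (E (n+1)) (D n) := rfl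
      rw [hstep]
      split
      · exact_mod_cast hEr (n+1)
      · rename_i hsub
        have := hchain.total (hEF (n+1)) (hmem n)
        rcases this with h | h
        · have : discRadius (E (n+1)) ≤ discRadius (D n) := by
            unfold discRadius
            have := Metric.diam_mono h (hBdd _ (hmem n))
            linarith
          have := hEr (n+1)
          push_cast at this ⊢
          linarith
        · exact absurd h hsub
  have hrhigh : ∀ n, discRadius (D n) ≤ s := fun n => hle _ (hmem n)
  have htend : Tendsto (fun n => discRadius (D n)) atTop (nhds s) := by
    refine tendsto_of_tendsto_of_tendsto_of_le_of_le (g := fun n : ℕ => s - 1/(n+1))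
      (h := fun _ => s) ?_ tendsto_const_nhds (fun n => by exact (hrlow n).le) (fun n => by exact hrhigh n)
    have := tendsto_one_div_add_atTop_nhds_zero_nat (𝕜 := ℝ)
    have h2 := Filter.Tendsto.const_sub s this
    simpa using h2
  -- mono in general
  have hmono' : ∀ m n, m ≤ n → D m ⊆ D n := by
    intro m n h
    induction n with
    | zero => simp_all
    | succ n ih =>
      rcases Nat.lt_or_ge m (n+1) with h' | h'
      · exact (ih (Nat.lt_succ_iff.mp h')).trans (hmono n)
      · have : m = n + 1 := le_antisymm h h'
        subst this; rfl
  -- key dist bound on the union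
  have hdistle : ∀ x ∈ ⋃₀ F, ∀ y ∈ ⋃₀ F, dist x y ≤ 2 * s := by
    rintro x ⟨A, hA, hxA⟩ y ⟨B, hB, hyB⟩
    have hcomp := hchain.total hA hB
    have key : ∀ C ∈ F, x ∈ C → y ∈ C → dist x y ≤ 2 * s := by
      intro C hC hx hy
      have h1 := Metric.dist_le_diam_of_mem (hBdd C hC) hx hy
      have h2 := hle C hC
      unfold discRadius at h2
      linarith
    rcases hcomp with h | h
    · exact key B hB (h hxA) hyB
    · exact key A hA hxA (h hyB)
  have hUbdd : Bornology.IsBounded (⋃₀ F) := by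
    rw [Metric.isBounded_iff]
    exact ⟨2 * s, fun x hx y hy => hdistle x hx y hy⟩
  -- union equality
  have hunion : (⋃ n, D n) = ⋃₀ F := by
    apply subset_antisymm
    · exact iUnion_subset fun n => subset_sUnion_of_mem (hmem n)
    · rintro x ⟨A, hA, hxA⟩
      rcases Classical.em (∃ n, A ⊆ D n) with hcase | hcase
      · obtain ⟨n, hn⟩ := hcase
        exact mem_iUnion.mpr ⟨n, hn hxA⟩
      · push_neg at hcase
        have hDsub : ∀ n, D n ⊆ A := by
          intro n
          rcases hchain.total hA (hmem n) with h | h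
          · exact absurd h (hcase n)
          · exact h
        obtain ⟨z, r, hr, rfl⟩ := hdisc A hA
        choose z' r' hr' hD'eq using fun n => hdisc (D n) (hmem n)
        have hrr : ∀ n, discRadius (D n) = r' n := by
          intro n; rw [hD'eq n, discRadius_ball _ (hr' n).le]
        have hrle : r ≤ s := by
          have := hle _ hA
          rwa [discRadius_ball z hr.le] at this
        have hdistzn : ∀ n, dist (z' n) z + r' n ≤ r := by
          intro n
          apply ball_subset_ball_dist (hr' n)
          rw [← hD'eq n]; exact hDsub n
        rw [Metric.mem_ball] at hxA
        have htend' : Tendsto (fun n => 2 * r' n) atTop (nhds (2 * s)) := by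
          have : Tendsto (fun n => r' n) atTop (nhds s) := by
            simpa [hrr] using htend
          exact this.const_mul 2
        have hlt : dist x z + r < 2 * s := by nlinarith [hrle, hxA, hr]
        have hev : ∀ᶠ n in atTop, dist x z + r < 2 * r' n :=
          htend'.eventually (eventually_gt_nhds hlt)
        obtain ⟨n, hn⟩ := hev.exists
        refine mem_iUnion.mpr ⟨n, ?_⟩
        rw [hD'eq n, Metric.mem_ball]
        calc dist x (z' n) ≤ dist x z + dist z (z' n) := dist_triangle _ _ _
          _ = dist x z + dist (z' n) z := by rw [dist_comm z]
          _ ≤ dist x z + (r - r' n) := by have := hdistzn n; linarith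
          _ < r' n := by linarith
  -- radius of the union
  have hradU : discRadius (⋃₀ F) = s := by
    have hub : Metric.diam (⋃₀ F) ≤ 2 * s :=
      Metric.diam_le_of_forall_dist_le (by linarith) hdistle
    have hlb : ∀ n, 2 * discRadius (D n) ≤ Metric.diam (⋃₀ F) := by
      intro n
      have h1 : Metric.diam (D n) ≤ Metric.diam (⋃₀ F) :=
        Metric.diam_mono (subset_sUnion_of_mem (hmem n)) hUbdd
      unfold discRadius
      linarith
    have h2s : 2 * s ≤ Metric.diam (⋃₀ F) := by
      have := le_of_tendsto (htend.const_mul 2) (Filter.Eventually.of_forall hlb)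
      linarith [this]
    unfold discRadius
    linarith
  exact ⟨D, hmem, hmono, hunion, hradU ▸ htend⟩
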